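/- Let k₁, l₁ ∈ ℝ with k₁ ≥ 2π and l₁ ≥ 2π, let M := max{k₁, l₁}, and let α > 0. Then (1/8)(α² + 1) − (α² + 1)/(8(1 + 4π²)) − α/(4(1 + 4π²)) − α/2 − ((α + 1)/2)·(3/2 + k₁l₁/4) − k₁²l₁²/(4(1 + l₁²)) − (α/4)·k₁²l₁²/(1 + k₁²) ≥ (1/10)(α² − 5αM² − 5M²). Moreover, if α ≥ 6M², then α² − 5αM² − 5M² > 0 (since 6M² > (5/2)M² + √((25/4)M⁴ + 5M²) holds for M ≥ 2π), and hence the left-hand side above is strictly positive. -/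
import Mathlib


open Real

set_option maxHeartbeats 1000000 in
/-- The final real-variable lower estimate for the non-normalized sectional
curvature `S(U,V)` of the 2CH system with vorticity in the cosine
directions. -/
theorem stmt12 (k₁ l₁ α : ℝ) (hk₁ : 2 * π ≤ k₁) (hl₁ : 2 * π ≤ l₁)
    (hα : 0 < α) (M : ℝ) (hM : M = max k₁ l₁) :
    ((1/10) * (α ^ 2 - 5 * α * M ^ 2 - 5 * M ^ 2)
      ≤ (1/8) * (α ^ 2 + 1) - (α ^ 2 + 1) / (8 * (1 + 4 * π ^ 2))
        - α / (4 * (1 + 4 * π ^ 2)) - α / 2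
        - ((α + 1) / 2) * (3/2 + k₁ * l₁ / 4)
        - k₁ ^ 2 * l₁ ^ 2 / (4 * (1 + l₁ ^ 2))
        - (α / 4) * (k₁ ^ 2 * l₁ ^ 2 / (1 + k₁ ^ 2)))
    ∧ (6 * M ^ 2 > (5/2) * M ^ 2 + Real.sqrt ((25/4) * M ^ 4 + 5 * M ^ 2))
    ∧ (α ≥ 6 * M ^ 2 →
        0 < α ^ 2 - 5 * α * M ^ 2 - 5 * M ^ 2
        ∧ 0 < (1/8) * (α ^ 2 + 1) - (α ^ 2 + 1) / (8 * (1 + 4 * π ^ 2))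
            - α / (4 * (1 + 4 * π ^ 2)) - α / 2
            - ((α + 1) / 2) * (3/2 + k₁ * l₁ / 4)
            - k₁ ^ 2 * l₁ ^ 2 / (4 * (1 + l₁ ^ 2))
            - (α / 4) * (k₁ ^ 2 * l₁ ^ 2 / (1 + k₁ ^ 2))) := by
  have hpi : (3.14 : ℝ) < π := by
    have := Real.pi_gt_d6; linarith
  have hk0 : (0:ℝ) < k₁ := by nlinarith
  have hl0 : (0:ℝ) < l₁ := by nlinarith
  have hkM : k₁ ≤ M := hM ▸ le_max_left _ _
  have hlM : l₁ ≤ M := hM ▸ le_max_right _ _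
  have hMpi : 2 * π ≤ M := le_trans hk₁ hkM
  have hM0 : (0:ℝ) < M := by nlinarith
  have hM2 : (39:ℝ) ≤ M ^ 2 := by nlinarith
  -- bound the divisions
  have hd1 : (α ^ 2 + 1) / (8 * (1 + 4 * π ^ 2)) ≤ (α ^ 2 + 1) / 320 := by
    apply div_le_div_of_nonneg_left (by positivity) (by norm_num) (by nlinarith)
  have hd2 : α / (4 * (1 + 4 * π ^ 2)) ≤ α / 160 := by
    apply div_le_div_of_nonneg_left (by positivity) (by norm_num) (by nlinarith)
  have hd3 : k₁ ^ 2 * l₁ ^ 2 / (4 * (1 + l₁ ^ 2)) ≤ k₁ ^ 2 / 4 := by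
    rw [div_le_div_iff₀ (by positivity) (by norm_num)]
    nlinarith [sq_nonneg k₁, sq_nonneg l₁]
  have hd4 : k₁ ^ 2 * l₁ ^ 2 / (1 + k₁ ^ 2) ≤ l₁ ^ 2 := by
    rw [div_le_iff₀ (by positivity)]
    nlinarith [sq_nonneg k₁, sq_nonneg l₁]
  have hd4' : (α / 4) * (k₁ ^ 2 * l₁ ^ 2 / (1 + k₁ ^ 2)) ≤ (α / 4) * l₁ ^ 2 := by
    apply mul_le_mul_of_nonneg_left hd4 (by positivity)
  have hkl : k₁ * l₁ ≤ M ^ 2 := by nlinarith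
  have hk2 : k₁ ^ 2 ≤ M ^ 2 := by nlinarith
  have hl2 : l₁ ^ 2 ≤ M ^ 2 := by nlinarith
  have main : (1/10) * (α ^ 2 - 5 * α * M ^ 2 - 5 * M ^ 2)
      ≤ (1/8) * (α ^ 2 + 1) - (α ^ 2 + 1) / (8 * (1 + 4 * π ^ 2))
        - α / (4 * (1 + 4 * π ^ 2)) - α / 2
        - ((α + 1) / 2) * (3/2 + k₁ * l₁ / 4)
        - k₁ ^ 2 * l₁ ^ 2 / (4 * (1 + l₁ ^ 2))
        - (α / 4) * (k₁ ^ 2 * l₁ ^ 2 / (1 + k₁ ^ 2)) := by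
    have hbound : ((α + 1) / 2) * (3/2 + k₁ * l₁ / 4)
        ≤ 3/4 * α + α * M ^ 2 / 8 + 3/4 + M ^ 2 / 8 := by
      nlinarith [mul_nonneg (by linarith : (0:ℝ) ≤ α + 1)
        (by linarith : (0:ℝ) ≤ M ^ 2 - k₁ * l₁)]
    have hαl : (α / 4) * l₁ ^ 2 ≤ α * M ^ 2 / 4 := by
      nlinarith [mul_nonneg hα.le (by linarith : (0:ℝ) ≤ M ^ 2 - l₁ ^ 2)]
    have hp : 39 * α ≤ α * M ^ 2 := by
      nlinarith [mul_nonneg hα.le (by linarith : (0:ℝ) ≤ M ^ 2 - 39)]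
    have hsq : 0 ≤ α ^ 2 := sq_nonneg α
    linarith [hd1, hd2, hd3, hd4', hbound, hαl, hp, hsq, hk2, hM2]
  refine ⟨main, ?_, ?_⟩
  · have h7 : (0:ℝ) < (7/2) * M ^ 2 := by positivity
    have : Real.sqrt ((25/4) * M ^ 4 + 5 * M ^ 2) < (7/2) * M ^ 2 := by
      rw [show (25/4) * M ^ 4 + 5 * M ^ 2 = (25/4) * M ^ 4 + 5 * M ^ 2 from rfl]
      rw [Real.sqrt_lt' h7]
      nlinarith
    linarith
  · intro hαM
    have h1 : 0 < α ^ 2 - 5 * α * M ^ 2 - 5 * M ^ 2 := by nlinarith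
    exact ⟨h1, by linarith⟩
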